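/- Let n ≥ 1 and let ξ be a symmetric canonical element for the integer lattice ℤ^n of SO(2n+1), with coordinates a_1 ≥ a_2 ≥ … ≥ a_n ≥ 0. Set m_ξ^+ = 2·#{j : a_j is odd} and m_ξ^- = 2·#{j : a_j is even} + 1, and let m = min(m_ξ^+, m_ξ^-) (so that the associated inner symmetric space N_ξ is the real Grassmannian G^ℝ_m(2n+1)). If m ≤ n, then for every k with 1 ≤ k ≤ n−m+1 one has 2(a_1+⋯+a_k) ≤ 2mk, and for every k with n−m+1 < k < n one has 2(a_1+⋯+a_k) ≤ 2m(n−m+1) + (k−n+m−1)(m+n−k). In particular 2a_1 ≤ 2m, and 2(a_1+a_2) ≤ 4m if m < n while 2(a_1+a_2) ≤ 4m−2 if m = n. -/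

import Mathlib

open scoped Classical

/-- `H_i = E_1 + ⋯ + E_i` for `so(2n+1)` (1-based index `i`). -/
def Hspin (n i : ℕ) : Fin n → ℝ := fun j => if (j : ℕ) + 1 ≤ i then 1 else 0

/-- The integer lattice `ℤ^n` inside `ℝ^n` (the integer lattice of `SO(2n+1)`). -/
def IntLat (n : ℕ) : Set (Fin n → ℝ) := {v | ∀ j, ∃ m : ℤ, v j = m}

/-- The set of symmetric canonical elements for a lattice `𝔏 ⊆ ℝ^n`. -/
def SymCanonSet (n : ℕ) (𝔏 : Set (Fin n → ℝ)) (H : ℕ → Fin n → ℝ) :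
    Set (Fin n → ℝ) :=
  {ξ | ∃ c : ℕ → ℕ, ξ = ∑ i ∈ Finset.Icc 1 n, c i • H i ∧ ξ ∈ 𝔏 ∧
    ∀ c' : ℕ → ℕ, (∀ i ∈ Finset.Icc 1 n, c' i ≤ c i) →
      (∑ i ∈ Finset.Icc 1 n, c' i • H i) ∈ 𝔏 →
      (ξ - ∑ i ∈ Finset.Icc 1 n, c' i • H i) ∈ (fun v => (2 : ℝ) • v) '' 𝔏 →
      (∑ i ∈ Finset.Icc 1 n, c' i • H i) = ξ}

/-- Sum of the first `k` (1-based) coordinates of `v`. -/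
def partialSum (n : ℕ) (v : Fin n → ℝ) (k : ℕ) : ℝ :=
  ∑ j ∈ Finset.univ.filter (fun j : Fin n => (j : ℕ) + 1 ≤ k), v j

/-- Number of coordinates of `v` equal to an odd integer. -/
noncomputable def nOdd (n : ℕ) (v : Fin n → ℝ) : ℕ :=
  (Finset.univ.filter fun j : Fin n => ∃ m : ℤ, Odd m ∧ v j = m).card

/-- Number of coordinates of `v` equal to an even integer. -/
noncomputable def nEven (n : ℕ) (v : Fin n → ℝ) : ℕ :=
  (Finset.univ.filter fun j : Fin n => ∃ m : ℤ, Even m ∧ v j = m).card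

lemma ivt_aux (f : ℕ → ℕ) (hf : ∀ j, f j ≤ f (j+1) + 1) :
    ∀ N v, f N ≤ v → v ≤ f 0 → ∃ j ≤ N, f j = v := by
  intro N
  induction N with
  | zero => intro v h1 h2; exact ⟨0, le_rfl, le_antisymm h1 h2⟩
  | succ N ih =>
    intro v h1 h2
    by_cases h : f N ≤ v
    · obtain ⟨j, hj, hjv⟩ := ih v h h2
      exact ⟨j, by omega, hjv⟩
    · exact ⟨N+1, le_rfl, by have := hf N; omega⟩

lemma count_odd (A : ℕ) :
    ((Finset.Icc 1 A).filter (fun v => Odd v)).card = (A+1)/2 := by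
  induction A with
  | zero => simp
  | succ A ih =>
    rw [show Finset.Icc 1 (A+1) = insert (A+1) (Finset.Icc 1 A) by
        ext x; simp [Finset.mem_Icc]; omega,
      Finset.filter_insert]
    by_cases h : Odd (A+1)
    · rw [if_pos h, Finset.card_insert_of_notMem (by simp), ih]
      rcases h with ⟨t, ht⟩; omega
    · rw [if_neg h, ih]
      have : Even (A+1) := Nat.not_odd_iff_even.mp h
      rcases this with ⟨t, ht⟩; omega

lemma count_even (A : ℕ) :
    ((Finset.Icc 1 A).filter (fun v => Even v)).card = A/2 := by
  induction A with
  | zero => simp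
  | succ A ih =>
    rw [show Finset.Icc 1 (A+1) = insert (A+1) (Finset.Icc 1 A) by
        ext x; simp [Finset.mem_Icc]; omega,
      Finset.filter_insert]
    by_cases h : Even (A+1)
    · rw [if_pos h, Finset.card_insert_of_notMem (by simp), ih]
      rcases h with ⟨t, ht⟩; omega
    · rw [if_neg h, ih]
      have : Odd (A+1) := Nat.not_even_iff_odd.mp h
      rcases this with ⟨t, ht⟩; omega

lemma gauss_aux (p n : ℕ) : ∀ k, p ≤ k → k ≤ n →
    2 * ∑ j ∈ Finset.Ico p k, (n - j) = (k - p) * ((n - p) + (n - k + 1)) := by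
  intro k hpk
  induction k, hpk using Nat.le_induction with
  | base => intro _; simp
  | succ k hk ih =>
    intro hkn
    have hkn' : k ≤ n := by omega
    have ih' := ih hkn'
    rw [Finset.sum_Ico_succ_top hk, Nat.mul_add]
    rw [ih']
    have h1 : p ≤ n := by omega
    zify [hk, hkn', h1, hkn, show p ≤ k + 1 by omega] at *
    ring_nf


/-- Uniton-number bounds for a symmetric canonical element `ξ` of
`SO(2n+1)` associated with the real Grassmannian `G^ℝ_m(2n+1)`,
`m = min(m_ξ^+, m_ξ^-) ≤ n`, where `m_ξ^+ = 2·#{j : a_j odd}` and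
`m_ξ^- = 2·#{j : a_j even} + 1`. -/
theorem so_odd_symmetric_uniton_bounds (n : ℕ) (hn : 1 ≤ n) (ξ : Fin n → ℝ)
    (hξ : ξ ∈ SymCanonSet n (IntLat n) (Hspin n))
    (hdec : ∀ j k : Fin n, j ≤ k → ξ k ≤ ξ j) (hpos : ∀ j, 0 ≤ ξ j)
    (m : ℕ) (hm : m = min (2 * nOdd n ξ) (2 * nEven n ξ + 1)) (hmn : m ≤ n) :
    (∀ k : ℕ, 1 ≤ k → k ≤ n - m + 1 →
      2 * partialSum n ξ k ≤ 2 * (m : ℝ) * k) ∧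
    (∀ k : ℕ, n - m + 1 < k → k < n →
      2 * partialSum n ξ k ≤
        2 * (m : ℝ) * ((n : ℝ) - m + 1) +
          ((k : ℝ) - n + m - 1) * ((m : ℝ) + n - k)) ∧
    2 * partialSum n ξ 1 ≤ 2 * (m : ℝ) ∧
    (m < n → 2 * partialSum n ξ 2 ≤ 4 * (m : ℝ)) ∧
    (m = n → 2 * partialSum n ξ 2 ≤ 4 * (m : ℝ) - 2) := by
  obtain ⟨c, hξeq, hξlat, hcanon⟩ := hξ
  -- coordinates of a nonnegative combination of the Hspin
  have hcoord : ∀ (d : ℕ → ℕ) (j : Fin n),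
      (∑ i ∈ Finset.Icc 1 n, d i • Hspin n i) j
        = ((∑ i ∈ Finset.Icc ((j:ℕ)+1) n, d i : ℕ) : ℝ) := by
    intro d j
    rw [Finset.sum_apply]
    have h1 : ∀ i ∈ Finset.Icc 1 n, (d i • Hspin n i) j
        = if (j:ℕ)+1 ≤ i then (d i : ℝ) else 0 := by
      intro i _
      simp only [Pi.smul_apply, Hspin]
      split <;> simp
    rw [Finset.sum_congr rfl h1, Finset.sum_ite, Finset.sum_const_zero, add_zero]
    rw [show (Finset.Icc 1 n).filter (fun i => (j:ℕ)+1 ≤ i)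
        = Finset.Icc ((j:ℕ)+1) n by
      ext i; simp only [Finset.mem_filter, Finset.mem_Icc]; omega]
    push_cast
    rfl
  set a : ℕ → ℕ := fun j => ∑ i ∈ Finset.Icc (j+1) n, c i with ha
  have hξa : ∀ j : Fin n, ξ j = (a (j:ℕ) : ℝ) := by
    intro j; rw [hξeq]; exact hcoord c j
  -- canonicity forces all coefficients ≤ 1
  have hc1 : ∀ i, 1 ≤ i → i ≤ n → c i ≤ 1 := by
    intro i hi1 hin
    by_contra hgt
    push_neg at hgt
    set c' : ℕ → ℕ := Function.update c i (c i - 2) with hc'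
    have hikey : ∀ S : Finset ℕ, i ∈ S → ∑ i' ∈ S, c i' = (∑ i' ∈ S, c' i') + 2 := by
      intro S hS
      rw [hc', Finset.sum_update_of_mem hS]
      rw [← Finset.add_sum_erase S c hS]
      have : S \ {i} = S.erase i := by ext x; simp [Finset.mem_erase, and_comm]
      rw [this]; omega
    have hikey2 : ∀ S : Finset ℕ, i ∉ S → ∑ i' ∈ S, c i' = ∑ i' ∈ S, c' i' := by
      intro S hS
      refine Finset.sum_congr rfl fun x hx => ?_
      rw [hc', Function.update_of_ne (by rintro rfl; exact hS hx)]
    have h1 : ∀ i' ∈ Finset.Icc 1 n, c' i' ≤ c i' := by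
      intro i' _
      rcases eq_or_ne i' i with rfl | h
      · simp [hc']
      · simp [hc', Function.update_of_ne h]
    have hlat : (∑ i ∈ Finset.Icc 1 n, c' i • Hspin n i) ∈ IntLat n := by
      intro j
      exact ⟨((∑ i' ∈ Finset.Icc ((j:ℕ)+1) n, c' i' : ℕ) : ℤ), by
        rw [hcoord c' j]; push_cast; ring⟩
    have hdiff : (ξ - ∑ i ∈ Finset.Icc 1 n, c' i • Hspin n i)
        ∈ (fun v => (2:ℝ) • v) '' IntLat n := by
      refine ⟨Hspin n i, fun j => ?_, ?_⟩
      · by_cases h : (j:ℕ)+1 ≤ i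
        · exact ⟨1, by simp [Hspin, h]⟩
        · exact ⟨0, by simp [Hspin, h]⟩
      · funext j
        simp only [Pi.sub_apply, Pi.smul_apply, smul_eq_mul]
        rw [hξa j, hcoord c' j]
        by_cases hji : (j:ℕ)+1 ≤ i
        · have hmem : i ∈ Finset.Icc ((j:ℕ)+1) n := by
            simp only [Finset.mem_Icc]; omega
          have hk2 := hikey _ hmem
          simp only [ha]
          rw [hk2, Hspin, if_pos hji]
          push_cast
          ring
        · have : i ∉ Finset.Icc ((j:ℕ)+1) n := by
            simp only [Finset.mem_Icc]; omega
          have hk2 := hikey2 _ this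
          simp only [ha]
          rw [hk2, Hspin, if_neg hji]
          ring
    have heq := hcanon c' h1 hlat hdiff
    have hj0 : ((⟨0, hn⟩ : Fin n) : ℕ) = 0 := rfl
    have := congrFun heq ⟨0, hn⟩
    rw [hcoord c' ⟨0, hn⟩, hξa ⟨0, hn⟩] at this
    rw [hj0] at this
    have hnat : (∑ i' ∈ Finset.Icc (0+1) n, c' i') = a 0 := by
      exact_mod_cast this
    have hmem : i ∈ Finset.Icc (0+1) n := by simp only [Finset.mem_Icc]; omega
    have hk2 := hikey _ hmem
    simp only [ha] at hnat
    omega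
  -- basic properties of a
  have hstep : ∀ j, a j ≤ a (j+1) + 1 := by
    intro j
    by_cases h : j + 1 ≤ n
    · have hins : Finset.Icc (j+1) n = insert (j+1) (Finset.Icc (j+1+1) n) := by
        ext x; simp only [Finset.mem_Icc, Finset.mem_insert]; omega
      simp only [ha]
      rw [hins, Finset.sum_insert (by simp only [Finset.mem_Icc]; omega)]
      have := hc1 (j+1) (by omega) h
      omega
    · have : Finset.Icc (j+1) n = ∅ := Finset.Icc_eq_empty (by omega)
      simp only [ha]
      rw [this]; simp
  have ha_anti : ∀ j j', j ≤ j' → a j' ≤ a j := by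
    intro j j' hjj
    apply Finset.sum_le_sum_of_subset
    intro x hx
    simp only [Finset.mem_Icc] at hx ⊢
    omega
  have ha_bound : ∀ j, a j ≤ n - j := by
    intro j
    calc a j ≤ ∑ i ∈ Finset.Icc (j+1) n, 1 := by
          apply Finset.sum_le_sum
          intro i hi
          simp only [Finset.mem_Icc] at hi
          exact hc1 i (by omega) hi.2
      _ = n - j := by rw [Finset.sum_const, smul_eq_mul, mul_one, Nat.card_Icc]; omega
  have ha_last : a (n-1) ≤ 1 := by
    have : a (n-1) ≤ n - (n-1) := ha_bound (n-1)
    omega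
  -- existence of coordinates with given value
  have hex : ∀ v : ℕ, ∃ j : Fin n, (1 ≤ v → v ≤ a 0 → a (j:ℕ) = v) := by
    intro v
    by_cases h : 1 ≤ v ∧ v ≤ a 0
    · obtain ⟨j, hj, hjv⟩ := ivt_aux a hstep (n-1) v (le_trans ha_last h.1) h.2
      exact ⟨⟨j, by omega⟩, fun _ _ => hjv⟩
    · exact ⟨⟨0, hn⟩, fun h1 h2 => absurd ⟨h1, h2⟩ h⟩
  choose g hg using hex
  have hAodd : (a 0 + 1) / 2 ≤ nOdd n ξ := by
    rw [← count_odd (a 0)]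
    unfold nOdd
    apply Finset.card_le_card_of_injOn g
    · intro v hv
      simp only [Finset.mem_coe, Finset.mem_filter, Finset.mem_Icc] at hv
      simp only [Finset.mem_coe, Finset.mem_filter, Finset.mem_univ, true_and]
      refine ⟨(v : ℤ), by exact_mod_cast hv.2, ?_⟩
      rw [hξa (g v), hg v hv.1.1 hv.1.2]
      push_cast
      ring
    · intro v hv w hw hvw
      simp only [Finset.coe_filter, Set.mem_setOf_eq, Finset.mem_Icc] at hv hw
      rw [← hg v hv.1.1 hv.1.2, ← hg w hw.1.1 hw.1.2, hvw]
  have hAeven : a 0 / 2 ≤ nEven n ξ := by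
    rw [← count_even (a 0)]
    unfold nEven
    apply Finset.card_le_card_of_injOn g
    · intro v hv
      simp only [Finset.mem_coe, Finset.mem_filter, Finset.mem_Icc] at hv
      simp only [Finset.mem_coe, Finset.mem_filter, Finset.mem_univ, true_and]
      refine ⟨(v : ℤ), by exact_mod_cast hv.2, ?_⟩
      rw [hξa (g v), hg v hv.1.1 hv.1.2]
      push_cast
      ring
    · intro v hv w hw hvw
      simp only [Finset.coe_filter, Set.mem_setOf_eq, Finset.mem_Icc] at hv hw
      rw [← hg v hv.1.1 hv.1.2, ← hg w hw.1.1 hw.1.2, hvw]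
  have hAm : a 0 ≤ m := by omega
  -- partial sums
  have hPS : ∀ k, partialSum n ξ k = ((∑ i ∈ Finset.range (min k n), a i : ℕ) : ℝ) := by
    intro k
    unfold partialSum
    calc ∑ j ∈ Finset.univ.filter (fun j : Fin n => (j:ℕ)+1 ≤ k), ξ j
        = ∑ j : Fin n, (fun i : ℕ => if i+1 ≤ k then ((a i : ℕ):ℝ) else 0) (j:ℕ) := by
          rw [Finset.sum_filter]
          exact Finset.sum_congr rfl fun j _ => by
            by_cases h : (j:ℕ)+1 ≤ k <;> simp [h, hξa j]
      _ = ∑ i ∈ Finset.range n, (if i+1 ≤ k then ((a i : ℕ):ℝ) else 0) := by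
          exact Fin.sum_univ_eq_sum_range (fun i => if i+1 ≤ k then ((a i : ℕ):ℝ) else 0) n
      _ = ∑ i ∈ (Finset.range n).filter (fun i => i+1 ≤ k), ((a i : ℕ):ℝ) :=
          (Finset.sum_filter _ _).symm
      _ = ∑ i ∈ Finset.range (min k n), ((a i : ℕ):ℝ) := by
          rw [show (Finset.range n).filter (fun i => i+1 ≤ k) = Finset.range (min k n) by
            ext i; simp only [Finset.mem_filter, Finset.mem_range]; omega]
      _ = ((∑ i ∈ Finset.range (min k n), a i : ℕ) : ℝ) := by push_cast; rfl
  -- natural-number bound for the first regime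
  have hSa_le : ∀ r, r ≤ n → (∑ i ∈ Finset.range r, a i) ≤ r * m := by
    intro r hr
    calc (∑ i ∈ Finset.range r, a i) ≤ ∑ i ∈ Finset.range r, m := by
          apply Finset.sum_le_sum
          intro i _
          exact le_trans (ha_anti 0 i (Nat.zero_le i)) hAm
      _ = r * m := by rw [Finset.sum_const, smul_eq_mul, Finset.card_range]
  have H1 : ∀ k : ℕ, 1 ≤ k → k ≤ n - m + 1 →
      2 * partialSum n ξ k ≤ 2 * (m : ℝ) * k := by
    intro k _ _
    rw [hPS k]
    have h1 : (∑ i ∈ Finset.range (min k n), a i) ≤ k * m := by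
      calc (∑ i ∈ Finset.range (min k n), a i) ≤ min k n * m :=
            hSa_le _ (Nat.min_le_right k n)
        _ ≤ k * m := Nat.mul_le_mul_right m (Nat.min_le_left k n)
    have h2 : ((∑ i ∈ Finset.range (min k n), a i : ℕ) : ℝ) ≤ (k : ℝ) * m :=
      le_trans (Nat.cast_le.mpr h1) (by push_cast; ring_nf; exact le_rfl)
    nlinarith [h2]
  have H2 : ∀ k : ℕ, n - m + 1 < k → k < n →
      2 * partialSum n ξ k ≤
        2 * (m : ℝ) * ((n : ℝ) - m + 1) +
          ((k : ℝ) - n + m - 1) * ((m : ℝ) + n - k) := by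
    intro k hk1 hk2
    have hpk : n - m + 1 ≤ k := by omega
    have hm1 : 1 ≤ m := by omega
    have hsplit : (∑ i ∈ Finset.range (min k n), a i)
        = (∑ i ∈ Finset.range (n - m + 1), a i) + ∑ i ∈ Finset.Ico (n - m + 1) k, a i := by
      rw [show min k n = k by omega, Finset.range_eq_Ico, Finset.range_eq_Ico]
      exact (Finset.sum_Ico_consecutive a (Nat.zero_le _) hpk).symm
    have hfirst : (∑ i ∈ Finset.range (n - m + 1), a i) ≤ (n - m + 1) * m :=
      hSa_le _ (by omega)
    have hsecond : (∑ i ∈ Finset.Ico (n - m + 1) k, a i)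
        ≤ ∑ i ∈ Finset.Ico (n - m + 1) k, (n - i) :=
      Finset.sum_le_sum fun i _ => ha_bound i
    have hgauss := gauss_aux (n - m + 1) n k hpk (by omega)
    have hnat : 2 * (∑ i ∈ Finset.range (min k n), a i)
        ≤ 2 * ((n - m + 1) * m)
          + (k - (n - m + 1)) * ((n - (n - m + 1)) + (n - k + 1)) := by
      rw [hsplit]; omega
    rw [hPS k]
    set S : ℕ := ∑ i ∈ Finset.range (min k n), a i with hS
    have hcast : ((2 * S : ℕ) : ℝ)
        ≤ ((2 * ((n - m + 1) * m)
          + (k - (n - m + 1)) * ((n - (n - m + 1)) + (n - k + 1)) : ℕ) : ℝ) :=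
      Nat.cast_le.mpr hnat
    push_cast [Nat.cast_sub hmn, Nat.cast_sub hpk, Nat.cast_sub (show k ≤ n by omega),
      Nat.cast_sub (show n - m + 1 ≤ n by omega)] at hcast
    nlinarith [hcast]
  refine ⟨H1, H2, ?_, ?_, ?_⟩
  · have := H1 1 le_rfl (by omega)
    simpa using this
  · intro hlt
    have := H1 2 (by omega) (by omega)
    push_cast at this
    linarith
  · intro hmeq
    rw [hPS 2]
    set S : ℕ := ∑ i ∈ Finset.range (min 2 n), a i with hS
    have hr : min 2 n ≤ 2 := Nat.min_le_left 2 n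
    have hsub : (∑ i ∈ Finset.range (min 2 n), a i) ≤ ∑ i ∈ Finset.range 2, a i :=
      Finset.sum_le_sum_of_subset (Finset.range_subset_range.mpr hr)
    have h2 : (∑ i ∈ Finset.range 2, a i) = a 0 + a 1 := by
      rw [Finset.sum_range_succ, Finset.sum_range_one]
    have ha1 : a 1 ≤ n - 1 := ha_bound 1
    have hnat : 2 * S ≤ 4 * m - 2 := by omega
    have hcast : ((2 * S : ℕ) : ℝ)
        ≤ ((4 * m - 2 : ℕ) : ℝ) := Nat.cast_le.mpr hnat
    have hm1 : 1 ≤ m := by omega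
    push_cast [Nat.cast_sub (show 2 ≤ 4 * m by omega)] at hcast
    linarith
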